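/- Let T be a finite tree and let 𝒫 be a vertex neighborhood partition of T. Then the general corona T∘𝒫 is a tree (it is connected and acyclic). -/

import Mathlib

open SimpleGraph

namespace GenCorona

universe u

/-- A vertex neighborhood partition of a graph `G`: for every vertex `v`, a partition
of the open neighborhood `N_G(v)` into nonempty sets. -/
structure NbhdPartition {V : Type u} (G : SimpleGraph V) where
  part : V → Set (Set V)
  nonempty : ∀ v : V, ∀ A ∈ part v, A.Nonempty
  subset_nbhd : ∀ v : V, ∀ A ∈ part v, A ⊆ G.neighborSet v
  covers : ∀ v : V, ∀ u ∈ G.neighborSet v, ∃ A ∈ part v, u ∈ A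
  eq_of_inter : ∀ v : V, ∀ A ∈ part v, ∀ B ∈ part v, (A ∩ B).Nonempty → A = B

variable {V : Type u}

/-- The vertex type of the general corona `G ∘ 𝒫`: external vertices `(v,1)` are encoded
as `Sum.inl v`, internal vertices `(v,A)` (with `A ∈ 𝒫(v)`) as `Sum.inr ⟨(v,A), _⟩`. -/
abbrev CoronaVert (G : SimpleGraph V) (P : NbhdPartition G) : Type u :=
  V ⊕ {p : V × Set V // p.2 ∈ P.part p.1}

/-- The general corona `G ∘ 𝒫`. -/
def corona (G : SimpleGraph V) (P : NbhdPartition G) : SimpleGraph (CoronaVert G P) :=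
  SimpleGraph.fromRel fun x y =>
    match x, y with
    | Sum.inl v, Sum.inr p => v = p.val.1
    | Sum.inr p, Sum.inr q =>
        G.Adj p.val.1 q.val.1 ∧ q.val.1 ∈ p.val.2 ∧ p.val.1 ∈ q.val.2
    | _, _ => False

/-- The set of external vertices of the general corona. -/
def Ext (G : SimpleGraph V) (P : NbhdPartition G) : Set (CoronaVert G P) :=
  Set.range Sum.inl

/-- A graph is a general corona of a tree if it is isomorphic to `T ∘ 𝒫` for some finite
tree `T` and some vertex neighborhood partition `𝒫` of `T`. -/
def IsGeneralCoronaOfTree {W : Type*} (H : SimpleGraph W) : Prop :=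
  ∃ (n : ℕ) (T : SimpleGraph (Fin n)) (P : NbhdPartition T),
    T.IsTree ∧ Nonempty (H ≃g corona T P)

/-- A graph `H` is a general corona of a tree with external vertex set `E`. -/
def IsGenCoronaWithExt {W : Type*} (H : SimpleGraph W) (E : Set W) : Prop :=
  ∃ (n : ℕ) (T : SimpleGraph (Fin n)) (P : NbhdPartition T),
    T.IsTree ∧ ∃ f : H ≃g corona T P, E = ⇑f ⁻¹' Ext T P

/-- `D` is a dominating set of `G`. -/
def IsDominating (G : SimpleGraph V) (D : Set V) : Prop :=
  ∀ v ∉ D, ∃ u ∈ D, G.Adj v u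

/-- `S` is a 2-packing of `G`: any two distinct vertices of `S` are at distance
greater than 2 (where the extended distance of unreachable vertices is `⊤`). -/
def Is2Packing (G : SimpleGraph V) (S : Set V) : Prop :=
  ∀ u ∈ S, ∀ v ∈ S, u ≠ v → 2 < G.edist u v

/-- A leaf is a vertex of degree 1, i.e. with exactly one neighbor. -/
def IsLeaf (G : SimpleGraph V) (v : V) : Prop :=
  (G.neighborSet v).ncard = 1

/-- The domination number: the minimum size of a dominating set. -/
noncomputable def dominationNumber (G : SimpleGraph V) : ℕ :=
  sInf {n : ℕ | ∃ D : Set V, IsDominating G D ∧ D.ncard = n}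

/-- The graph obtained from `G` by subdividing every edge in `F` (each once):
for each `e ∈ F` a new vertex `Sum.inr e` replaces the edge `e` by a path of length two. -/
def subdivide (G : SimpleGraph V) (F : Set (Sym2 V)) : SimpleGraph (V ⊕ F) :=
  SimpleGraph.fromRel fun x y =>
    match x, y with
    | Sum.inl u, Sum.inl v => G.Adj u v ∧ s(u, v) ∉ F
    | Sum.inl u, Sum.inr e => u ∈ e.val
    | _, _ => False

/-- The domination subdivision number `sd(G)`: the minimum number of edges which must be
subdivided (each edge at most once) in order to increase the domination number. -/
noncomputable def sd (G : SimpleGraph V) : ℕ :=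
  sInf {k : ℕ | ∃ F : Set (Sym2 V), F ⊆ G.edgeSet ∧ F.ncard = k ∧
    dominationNumber G < dominationNumber (subdivide G F)}

/-- The corona `G ∘ K₁`: attach one new pendant vertex `Sum.inr v` to each vertex
`Sum.inl v` of `G`. -/
def coronaK1 (G : SimpleGraph V) : SimpleGraph (V ⊕ V) :=
  SimpleGraph.fromRel fun x y =>
    match x, y with
    | Sum.inl u, Sum.inl w => G.Adj u w
    | Sum.inl u, Sum.inr w => u = w
    | _, _ => False

/-- The 2-subdivision `S₂(G)`: every edge `uv` is replaced by a path `(u, x₁, x₂, v)`;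
the new vertex `Sum.inr ⟨(u,v), _⟩` is the subdivision vertex adjacent to `u`. -/
def twoSubdivision (G : SimpleGraph V) : SimpleGraph (V ⊕ {p : V × V // G.Adj p.1 p.2}) :=
  SimpleGraph.fromRel fun x y =>
    match x, y with
    | Sum.inl u, Sum.inr p => u = p.val.1
    | Sum.inr p, Sum.inr q => p.val.1 = q.val.2 ∧ p.val.2 = q.val.1
    | _, _ => False

/-- `𝒫'` is a refinement of `𝒫`. -/
def Refines {G : SimpleGraph V} (P' P : NbhdPartition G) : Prop :=
  ∀ v : V, ∀ A ∈ P'.part v, ∃ B ∈ P.part v, A ⊆ B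

/-- The graph obtained by contracting the two vertices `x` and `y` of `G` to the single
vertex `x` (the vertex `y` is removed, and `x` becomes adjacent to all former
neighbors of `y`). -/
def contractPair {W : Type*} (G : SimpleGraph W) (x y : W) :
    SimpleGraph {w : W // w ≠ y} :=
  SimpleGraph.fromRel fun a b =>
    G.Adj a.val b.val ∨ (a.val = x ∧ G.Adj y b.val) ∨ (b.val = x ∧ G.Adj a.val y)

/-- The graph obtained from `G` by attaching a path `(x, y, z)` (encoded as
`Sum.inr 0, Sum.inr 1, Sum.inr 2`) to the vertex `v` via the edge `v x`. -/
def attachPath3 {W : Type*} (G : SimpleGraph W) (v : W) : SimpleGraph (W ⊕ Fin 3) :=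
  SimpleGraph.fromRel fun a b =>
    match a, b with
    | Sum.inl u, Sum.inl w => G.Adj u w
    | Sum.inl u, Sum.inr i => u = v ∧ i = 0
    | Sum.inr i, Sum.inr j => (i = 0 ∧ j = 1) ∨ (i = 1 ∧ j = 2)
    | _, _ => False

/-- The graph obtained from `G` by attaching a path `(x, y)` (encoded as
`Sum.inr 0, Sum.inr 1`) to the vertex `v` via the edge `v x`. -/
def attachPath2 {W : Type*} (G : SimpleGraph W) (v : W) : SimpleGraph (W ⊕ Fin 2) :=
  SimpleGraph.fromRel fun a b =>
    match a, b with
    | Sum.inl u, Sum.inl w => G.Adj u w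
    | Sum.inl u, Sum.inr i => u = v ∧ i = 0
    | Sum.inr i, Sum.inr j => i = 0 ∧ j = 1
    | _, _ => False

/-- The family `𝓕` of labeled trees; the label of a vertex is `A` when it belongs to the
distinguished set `L`, and `B` otherwise.  The family contains the labeled path `P₄`
(leaves labeled `A`, support vertices labeled `B`) and is closed under the two
attachment operations. -/
inductive LabF : ∀ {W : Type}, SimpleGraph W → Set W → Prop where
  | base : LabF (SimpleGraph.pathGraph 4) ({0, 3} : Set (Fin 4))
  | opA {W : Type} {G : SimpleGraph W} {L : Set W} (v : W) :
      LabF G L → v ∈ L →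
        LabF (attachPath3 G v) (Sum.inl '' L ∪ {Sum.inr (2 : Fin 3)})
  | opB {W : Type} {G : SimpleGraph W} {L : Set W} (v : W) :
      LabF G L → v ∉ L →
        LabF (attachPath2 G v) (Sum.inl '' L ∪ {Sum.inr (1 : Fin 2)})

/-- A tree `T` belongs to the family `𝓕` if it admits a labeling constructed by the
above rules, i.e. it is isomorphic to a member of the inductively generated family. -/
def MemF {W : Type*} (T : SimpleGraph W) : Prop :=
  ∃ (W' : Type) (G : SimpleGraph W') (L : Set W'), LabF G L ∧ Nonempty (T ≃g G)


section Aux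

variable {V : Type u} {T : SimpleGraph V} {P : NbhdPartition T}

/-- Projection of a corona vertex to its base vertex. -/
def pr (T : SimpleGraph V) (P : NbhdPartition T) : CoronaVert T P → V :=
  Sum.elim id (fun p => p.val.1)

@[simp] lemma pr_inl (v : V) : pr T P (Sum.inl v) = v := rfl

@[simp] lemma pr_inr (p : {p : V × Set V // p.2 ∈ P.part p.1}) :
    pr T P (Sum.inr p) = p.val.1 := rfl

lemma corona_adj_cases {x y : CoronaVert T P} (h : (corona T P).Adj x y) :
    ((∃ q : {p : V × Set V // p.2 ∈ P.part p.1}, x = Sum.inl q.val.1 ∧ y = Sum.inr q) ∨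
      (∃ q : {p : V × Set V // p.2 ∈ P.part p.1}, y = Sum.inl q.val.1 ∧ x = Sum.inr q)) ∨
    (∃ p q : {p : V × Set V // p.2 ∈ P.part p.1}, x = Sum.inr p ∧ y = Sum.inr q ∧
      T.Adj p.val.1 q.val.1 ∧ q.val.1 ∈ p.val.2 ∧ p.val.1 ∈ q.val.2) := by
  rw [corona, SimpleGraph.fromRel_adj] at h
  obtain ⟨hne, h | h⟩ := h <;> rcases x with v | p <;> rcases y with u | q
  · exact h.elim
  · exact Or.inl (Or.inl ⟨q, by rw [h], rfl⟩)
  · exact h.elim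
  · exact Or.inr ⟨p, q, rfl, rfl, h⟩
  · exact h.elim
  · exact h.elim
  · exact Or.inl (Or.inr ⟨p, by rw [h], rfl⟩)
  · exact Or.inr ⟨p, q, rfl, rfl, h.1.symm, h.2.2, h.2.1⟩

lemma not_adj_inl_inl (v u : V) : ¬ (corona T P).Adj (Sum.inl v) (Sum.inl u) := by
  intro h
  rcases corona_adj_cases h with (⟨q, h1, h2⟩ | ⟨q, h1, h2⟩) | ⟨p, q, h1, h2, _⟩ <;>
    simp_all

lemma adj_inl_inr {v : V} {q : {p : V × Set V // p.2 ∈ P.part p.1}}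
    (h : (corona T P).Adj (Sum.inl v) (Sum.inr q)) : v = q.val.1 := by
  rw [corona, SimpleGraph.fromRel_adj] at h
  obtain ⟨-, h | h⟩ := h
  · exact h
  · exact h.elim

lemma adj_inr_inl {u : V} {p : {p : V × Set V // p.2 ∈ P.part p.1}}
    (h : (corona T P).Adj (Sum.inr p) (Sum.inl u)) : u = p.val.1 :=
  adj_inl_inr h.symm

lemma adj_inr_inr {p q : {p : V × Set V // p.2 ∈ P.part p.1}}
    (h : (corona T P).Adj (Sum.inr p) (Sum.inr q)) :
    T.Adj p.val.1 q.val.1 ∧ q.val.1 ∈ p.val.2 ∧ p.val.1 ∈ q.val.2 := by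
  rw [corona, SimpleGraph.fromRel_adj] at h
  obtain ⟨-, h | h⟩ := h
  · exact h
  · exact ⟨h.1.symm, h.2.2, h.2.1⟩

lemma adj_pendant (q : {p : V × Set V // p.2 ∈ P.part p.1}) :
    (corona T P).Adj (Sum.inl q.val.1) (Sum.inr q) := by
  rw [corona, SimpleGraph.fromRel_adj]
  exact ⟨by simp, Or.inl rfl⟩

lemma adj_cross {p q : {p : V × Set V // p.2 ∈ P.part p.1}}
    (hadj : T.Adj p.val.1 q.val.1) (h1 : q.val.1 ∈ p.val.2) (h2 : p.val.1 ∈ q.val.2) :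
    (corona T P).Adj (Sum.inr p) (Sum.inr q) := by
  rw [corona, SimpleGraph.fromRel_adj]
  refine ⟨?_, Or.inl ⟨hadj, h1, h2⟩⟩
  simp only [ne_eq, Sum.inr.injEq]
  rintro rfl
  exact T.loopless.irrefl _ hadj

lemma pendant_shape {a b : CoronaVert T P} (h : (corona T P).Adj a b)
    (heq : pr T P a = pr T P b) :
    (∃ q, a = Sum.inl q.val.1 ∧ b = Sum.inr q) ∨
    (∃ q, b = Sum.inl q.val.1 ∧ a = Sum.inr q) := by
  rcases corona_adj_cases h with hc | ⟨p, q, rfl, rfl, hadj, -, -⟩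
  · exact hc
  · simp only [pr_inr] at heq
    exact absurd (heq ▸ hadj) (T.loopless.irrefl _)

lemma part_eq {p p' : {p : V × Set V // p.2 ∈ P.part p.1}} {u : V}
    (hfst : p.val.1 = p'.val.1) (hu : u ∈ p.val.2) (hu' : u ∈ p'.val.2) : p = p' := by
  have h2 := p'.property
  rw [← hfst] at h2
  have hsnd := P.eq_of_inter p.val.1 p.val.2 p.property p'.val.2 h2 ⟨u, hu, hu'⟩
  exact Subtype.ext (Prod.ext hfst hsnd)

lemma edge_cases {e : Sym2 (CoronaVert T P)} (he : e ∈ (corona T P).edgeSet) :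
    (∃ q, e = s(Sum.inl q.val.1, Sum.inr q)) ∨
    (∃ p q, T.Adj p.val.1 q.val.1 ∧ q.val.1 ∈ p.val.2 ∧ p.val.1 ∈ q.val.2 ∧
      e = s(Sum.inr p, Sum.inr q)) := by
  induction e using Sym2.ind with
  | _ x y =>
    rw [SimpleGraph.mem_edgeSet] at he
    rcases corona_adj_cases he with (⟨q, rfl, rfl⟩ | ⟨q, rfl, rfl⟩) | ⟨p, q, rfl, rfl, h1, h2, h3⟩
    · exact Or.inl ⟨q, rfl⟩
    · exact Or.inl ⟨q, Sym2.eq_swap⟩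
    · exact Or.inr ⟨p, q, h1, h2, h3, rfl⟩

lemma cross_edge_inj {e₁ e₂ : Sym2 (CoronaVert T P)}
    (h₁ : e₁ ∈ (corona T P).edgeSet) (h₂ : e₂ ∈ (corona T P).edgeSet)
    (hm : Sym2.map (pr T P) e₁ = Sym2.map (pr T P) e₂)
    (hd : ¬ (Sym2.map (pr T P) e₁).IsDiag) : e₁ = e₂ := by
  rcases edge_cases h₁ with ⟨q, rfl⟩ | ⟨p, q, hadj, hq, hp, rfl⟩
  · exact absurd (by simp [Sym2.map_pair_eq]) hd
  rcases edge_cases h₂ with ⟨q', rfl⟩ | ⟨p', q', hadj', hq', hp', rfl⟩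
  · rw [hm] at hd
    exact absurd (by simp [Sym2.map_pair_eq]) hd
  simp only [Sym2.map_pair_eq, pr_inr, Sym2.eq_iff] at hm
  rcases hm with ⟨hfst, hsnd⟩ | ⟨hfst, hsnd⟩
  · have hpp : p = p' := part_eq hfst hq (by rw [hsnd]; exact hq')
    have hqq : q = q' := part_eq hsnd hp (by rw [hfst]; exact hp')
    rw [hpp, hqq]
  · have hpq : p = q' := part_eq hfst hq (by rw [hsnd]; exact hp')
    have hqp : q = p' := part_eq hsnd hp (by rw [hfst]; exact hq')
    rw [hpq, hqp, Sym2.eq_swap]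

/-- Projection of a corona walk to a walk in the base graph, skipping pendant edges. -/
def proj : ∀ {x y : CoronaVert T P},
    (corona T P).Walk x y → T.Walk (pr T P x) (pr T P y)
  | _, _, SimpleGraph.Walk.nil => SimpleGraph.Walk.nil
  | _, _, SimpleGraph.Walk.cons (u := Sum.inl v) (v := Sum.inl u) h w =>
      absurd h (not_adj_inl_inl v u)
  | _, _, SimpleGraph.Walk.cons (u := Sum.inl v) (v := Sum.inr q) h w =>
      (proj w).copy (adj_inl_inr h).symm rfl
  | _, _, SimpleGraph.Walk.cons (u := Sum.inr p) (v := Sum.inl u) h w =>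
      (proj w).copy (adj_inr_inl h) rfl
  | _, _, SimpleGraph.Walk.cons (u := Sum.inr p) (v := Sum.inr q) h w =>
      SimpleGraph.Walk.cons (adj_inr_inr h).1 (proj w)

lemma proj_support_mem {x y : CoronaVert T P} (w : (corona T P).Walk x y) :
    ∀ z ∈ w.support, pr T P z ∈ (proj w).support := by
  induction w with
  | nil =>
    intro z hz
    simp only [SimpleGraph.Walk.support_nil, List.mem_singleton] at hz
    simp [hz, proj]
  | @cons a b c h w ih =>
    intro z hz
    rw [SimpleGraph.Walk.support_cons, List.mem_cons] at hz
    rcases a with v | p <;> rcases b with u | q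
    · exact absurd h (not_adj_inl_inl v u)
    · simp only [proj]; erw [SimpleGraph.Walk.support_copy]
      rcases hz with rfl | hz
      · rw [show pr T P (Sum.inl v) = pr T P (Sum.inr q) from adj_inl_inr h]
        exact (proj w).start_mem_support
      · exact ih z hz
    · simp only [proj]; erw [SimpleGraph.Walk.support_copy]
      rcases hz with rfl | hz
      · rw [show pr T P (Sum.inr p) = pr T P (Sum.inl u) from (adj_inr_inl h).symm]
        exact (proj w).start_mem_support
      · exact ih z hz
    · simp only [proj]; erw [SimpleGraph.Walk.support_cons, List.mem_cons]
      rcases hz with rfl | hz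
      · exact Or.inl rfl
      · exact Or.inr (ih z hz)

lemma proj_edges_mem {x y : CoronaVert T P} (w : (corona T P).Walk x y) :
    ∀ e ∈ (proj w).edges, ∃ e' ∈ w.edges, e = Sym2.map (pr T P) e' := by
  induction w with
  | nil =>
    intro e he
    simp [proj] at he
  | @cons a b c h w ih =>
    intro e he
    rcases a with v | p <;> rcases b with u | q
    · exact absurd h (not_adj_inl_inl v u)
    · rw [proj] at he; erw [SimpleGraph.Walk.edges_copy] at he
      obtain ⟨e', he', rfl⟩ := ih e he
      exact ⟨e', by simp [he'], rfl⟩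
    · rw [proj] at he; erw [SimpleGraph.Walk.edges_copy] at he
      obtain ⟨e', he', rfl⟩ := ih e he
      exact ⟨e', by simp [he'], rfl⟩
    · rw [proj] at he; erw [SimpleGraph.Walk.edges_cons, List.mem_cons] at he
      rcases he with rfl | he
      · exact ⟨s(Sum.inr p, Sum.inr q), by simp, by simp [Sym2.map_pair_eq]⟩
      · obtain ⟨e', he', rfl⟩ := ih e he
        exact ⟨e', by simp [he'], rfl⟩

lemma proj_isTrail {x y : CoronaVert T P} (w : (corona T P).Walk x y)
    (hw : w.IsTrail) : (proj w).IsTrail := by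
  induction w with
  | nil => exact SimpleGraph.Walk.IsTrail.nil
  | @cons a b c h w ih =>
    rw [SimpleGraph.Walk.isTrail_cons] at hw
    rcases a with v | p <;> rcases b with u | q
    · exact absurd h (not_adj_inl_inl v u)
    · rw [proj]; erw [SimpleGraph.Walk.isTrail_copy]
      exact ih hw.1
    · rw [proj]; erw [SimpleGraph.Walk.isTrail_copy]
      exact ih hw.1
    · rw [proj]; erw [SimpleGraph.Walk.isTrail_cons]
      refine ⟨ih hw.1, fun hmem => ?_⟩
      obtain ⟨e', he', hemap⟩ := proj_edges_mem w _ hmem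
      have hcross : ¬ (Sym2.map (pr T P) s(Sum.inr p, Sum.inr q) :
          Sym2 V).IsDiag := by
        simp only [Sym2.map_pair_eq, pr_inr, Sym2.mk_isDiag_iff]
        exact (adj_inr_inr h).1.ne
      have : s(Sum.inr p, Sum.inr q) = e' := by
        refine cross_edge_inj (((corona T P).mem_edgeSet).mpr h)
          (w.edges_subset_edgeSet he') ?_ hcross
        rw [← hemap]
        simp [Sym2.map_pair_eq]
      exact hw.2 (this ▸ he')

lemma acyclic_closed_trail {W : Type*} {G : SimpleGraph W} (hG : G.IsAcyclic) {v : W}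
    (w : G.Walk v v) (hw : w.IsTrail) : w = SimpleGraph.Walk.nil := by
  cases w with
  | nil => rfl
  | cons h p =>
    exfalso
    rw [SimpleGraph.Walk.isTrail_cons] at hw
    have hb := (SimpleGraph.isAcyclic_iff_forall_adj_isBridge.mp hG) h
    rw [SimpleGraph.isBridge_iff_adj_and_forall_walk_mem_edges] at hb
    have hmem := hb p.reverse
    rw [SimpleGraph.Walk.edges_reverse, List.mem_reverse] at hmem
    exact hw.2 hmem

end Aux

/-- The general corona of a finite tree is a tree (connected and acyclic). -/
theorem corona_isTree {V : Type u} [Fintype V]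
    (T : SimpleGraph V) (hT : T.IsTree) (P : NbhdPartition T) :
    (corona T P).Connected ∧ (corona T P).IsAcyclic := by
  constructor
  · -- Connectivity
    have hne : Nonempty V := hT.1.nonempty
    have reach_inl : ∀ x : CoronaVert T P,
        (corona T P).Reachable x (Sum.inl (pr T P x)) := by
      rintro (v | p)
      · exact SimpleGraph.Reachable.refl _
      · exact (adj_pendant p).symm.reachable
    have key : ∀ v u : V, (corona T P).Reachable (Sum.inl v) (Sum.inl u) := by
      intro v u
      obtain ⟨w⟩ := hT.1.preconnected v u
      induction w with
      | nil => exact SimpleGraph.Reachable.refl _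
      | @cons a z c h w ih =>
        obtain ⟨A, hA, hzA⟩ := P.covers a z h
        obtain ⟨B, hB, haB⟩ := P.covers z a h.symm
        have adj1 := adj_pendant (⟨(a, A), hA⟩ : {p : V × Set V // p.2 ∈ P.part p.1})
        have adj2 := adj_cross (p := ⟨(a, A), hA⟩) (q := ⟨(z, B), hB⟩) h hzA haB
        have adj3 := adj_pendant (⟨(z, B), hB⟩ : {p : V × Set V // p.2 ∈ P.part p.1})
        exact (adj1.reachable.trans
          (adj2.reachable.trans adj3.symm.reachable)).trans ih
    constructor
    intro a b
    exact ((reach_inl a).trans (key (pr T P a) (pr T P b))).trans (reach_inl b).symm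
  · -- Acyclicity
    intro x0 c hc
    have htrail : (proj c).IsTrail := proj_isTrail c hc.isCircuit.isTrail
    have hnil : proj c = SimpleGraph.Walk.nil := acyclic_closed_trail hT.2 _ htrail
    have hsup : ∀ z ∈ c.support, pr T P z = pr T P x0 := by
      intro z hz
      have hmem := proj_support_mem c z hz
      rw [hnil] at hmem
      simpa using hmem
    have hlen := hc.three_le_length
    cases c with
    | nil => simp at hlen
    | @cons _ x1 _ h1 w1 =>
      cases w1 with
      | nil => simp [SimpleGraph.Walk.length_cons] at hlen
      | @cons _ x2 _ h2 w2 =>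
        cases w2 with
        | nil => simp [SimpleGraph.Walk.length_cons] at hlen
        | @cons _ x3 _ h3 r =>
          have hnd := hc.2
          simp only [SimpleGraph.Walk.support_cons, List.tail_cons] at hnd
          have hm1 : x1 ∈ (SimpleGraph.Walk.cons h1
              (SimpleGraph.Walk.cons h2 (SimpleGraph.Walk.cons h3 r))).support := by
            simp [SimpleGraph.Walk.support_cons]
          have hm2 : x2 ∈ (SimpleGraph.Walk.cons h1
              (SimpleGraph.Walk.cons h2 (SimpleGraph.Walk.cons h3 r))).support := by
            simp [SimpleGraph.Walk.support_cons]
          have hm3 : x3 ∈ (SimpleGraph.Walk.cons h1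
              (SimpleGraph.Walk.cons h2 (SimpleGraph.Walk.cons h3 r))).support := by
            simp only [SimpleGraph.Walk.support_cons, List.mem_cons]
            exact Or.inr (Or.inr (Or.inr r.start_mem_support))
          have heq1 : pr T P x0 = pr T P x1 := (hsup x1 hm1).symm
          have heq2 : pr T P x1 = pr T P x2 :=
            (hsup x1 hm1).trans (hsup x2 hm2).symm
          have heq3 : pr T P x2 = pr T P x3 :=
            (hsup x2 hm2).trans (hsup x3 hm3).symm
          have s1 := pendant_shape h1 heq1
          have s2 := pendant_shape h2 heq2
          rcases s1 with ⟨q, hx0, hx1⟩ | ⟨q, hx1, hx0⟩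
          · rcases s2 with ⟨q2, hx1', hx2⟩ | ⟨q2, hx2, hx1'⟩
            · rw [hx1] at hx1'; simp at hx1'
            · have hq : q = q2 := Sum.inr.inj (hx1.symm.trans hx1')
              have hx2x0 : x2 = x0 := by rw [hx2, hx0, hq]
              have h2' := (List.nodup_cons.mp (List.nodup_cons.mp hnd).2).1
              exact h2' (by rw [hx2x0]; exact r.end_mem_support)
          · rcases s2 with ⟨q2, hx1', hx2⟩ | ⟨q2, hx2', hx1'⟩
            · have s3 := pendant_shape h3 heq3
              rcases s3 with ⟨q3, hx2'', hx3⟩ | ⟨q3, hx3, hx2''⟩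
              · rw [hx2] at hx2''; simp at hx2''
              · have hq : q2 = q3 := Sum.inr.inj (hx2.symm.trans hx2'')
                have hx3x1 : x3 = x1 := by rw [hx3, hx1', ← hq]
                have h1' := (List.nodup_cons.mp hnd).1
                refine h1' (List.mem_cons_of_mem _ ?_)
                rw [← hx3x1]
                exact r.start_mem_support
            · rw [hx1] at hx1'; simp at hx1'

end GenCorona
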